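/- For every real number x > 1, the series ∑_{i=2}^∞ C_i·x^{i−1}·(x−1)/(x+1)^{2i} converges and equals (x−1)/x² − (x−1)/(x+1)²; equivalently, (−3x − 1)/(x(x+1)²) + ∑_{i=2}^∞ C_i·x^{i−1}·(x−1)/(x+1)^{2i} = −1/x². -/
import Mathlib
set_option maxHeartbeats 1000000

open Finset

lemma my_centralBinom_le (n : ℕ) : Nat.centralBinom n ≤ 4 ^ n := by
  induction n with
  | zero => simp [Nat.centralBinom]
  | succ n ih =>
    have h := Nat.succ_mul_centralBinom_succ n
    have h2 : (n + 1) * Nat.centralBinom (n + 1) ≤ (n + 1) * (4 * Nat.centralBinom n) := by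
      rw [h]; nlinarith [Nat.centralBinom_pos n]
    have h3 : Nat.centralBinom (n + 1) ≤ 4 * Nat.centralBinom n :=
      Nat.le_of_mul_le_mul_left h2 (Nat.succ_pos n)
    calc Nat.centralBinom (n + 1) ≤ 4 * Nat.centralBinom n := h3
      _ ≤ 4 * 4 ^ n := by exact Nat.mul_le_mul_left 4 ih
      _ = 4 ^ (n + 1) := by ring

lemma my_catalan_le (n : ℕ) : (catalan n : ℝ) ≤ 4 ^ n := by
  have h1 : catalan n ≤ Nat.centralBinom n := by
    have := succ_mul_catalan_eq_centralBinom n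
    calc catalan n ≤ (n + 1) * catalan n := Nat.le_mul_of_pos_left _ (Nat.succ_pos n)
      _ = Nat.centralBinom n := this
  have := h1.trans (my_centralBinom_le n)
  exact_mod_cast this

lemma my_summable {u : ℝ} (hu0 : 0 ≤ u) (hu : u < 1/4) :
    Summable (fun n : ℕ => (catalan n : ℝ) * u ^ n) := by
  have h4u : 4 * u < 1 := by linarith
  have h4u0 : 0 ≤ 4 * u := by linarith
  apply Summable.of_nonneg_of_le (fun n => by positivity)
    (fun n => ?_) (summable_geometric_of_lt_one h4u0 h4u)
  calc (catalan n : ℝ) * u ^ n ≤ 4 ^ n * u ^ n :=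
        mul_le_mul_of_nonneg_right (my_catalan_le n) (by positivity)
    _ = (4 * u) ^ n := by rw [mul_pow]

lemma my_quadratic {u : ℝ} (hu0 : 0 ≤ u) (hu : u < 1/4) :
    u * (∑' n : ℕ, (catalan n : ℝ) * u ^ n) ^ 2
      = (∑' n : ℕ, (catalan n : ℝ) * u ^ n) - 1 := by
  set f : ℕ → ℝ := fun n => (catalan n : ℝ) * u ^ n with hf
  have hs : Summable f := my_summable hu0 hu
  have hnorm : Summable fun n => ‖f n‖ := by
    apply hs.congr
    intro n
    rw [Real.norm_of_nonneg]
    rw [hf]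
    positivity
  have hcauchy : ((∑' n, f n) * ∑' n, f n)
      = ∑' n : ℕ, ∑ kl ∈ antidiagonal n, f kl.1 * f kl.2 :=
    tsum_mul_tsum_eq_tsum_sum_antidiagonal_of_summable_norm hnorm hnorm
  have hterm : ∀ n : ℕ, (∑ kl ∈ antidiagonal n, f kl.1 * f kl.2)
      = (catalan (n+1) : ℝ) * u ^ n := by
    intro n
    rw [catalan_succ' n]
    push_cast
    rw [Finset.sum_mul]
    apply Finset.sum_congr rfl
    intro kl hkl
    have hkl' : kl.1 + kl.2 = n := Finset.HasAntidiagonal.mem_antidiagonal.mp hkl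
    simp only [hf]
    rw [← hkl', pow_add]
    ring
  have hshift : (∑' n : ℕ, f n) = f 0 + ∑' n : ℕ, f (n + 1) := Summable.tsum_eq_zero_add hs
  have hf0 : f 0 = 1 := by simp [hf]
  have : u * ((∑' n, f n) * ∑' n, f n) = ∑' n : ℕ, f (n + 1) := by
    rw [hcauchy, ← tsum_mul_left]
    apply tsum_congr
    intro n
    rw [hterm n, hf]
    push_cast
    ring
  rw [pow_two, this, hshift, hf0]
  ring

lemma my_root {u : ℝ} (hu0 : 0 ≤ u) (hu : u < 1/4) :
    u * (∑' n : ℕ, (catalan n : ℝ) * u ^ n) ≤ 1/2 := by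
  by_contra hgt
  push_neg at hgt
  set v : ℝ := (u + 1/4) / 2 with hv
  have hv0 : 0 ≤ v := by rw [hv]; linarith
  have hvlt : v < 1/4 := by rw [hv]; linarith
  have huv : u < v := by rw [hv]; linarith
  -- h(w) := w * S(w) satisfies (h - 1/2)^2 = 1/4 - w
  have key : ∀ w : ℝ, 0 ≤ w → w < 1/4 →
      (w * (∑' n : ℕ, (catalan n : ℝ) * w ^ n) - 1/2) ^ 2 = 1/4 - w := by
    intro w hw0 hw
    have := my_quadratic hw0 hw
    nlinarith [this]
  -- monotonicity: u * S u ≤ v * S v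
  have hmono : u * (∑' n : ℕ, (catalan n : ℝ) * u ^ n)
      ≤ v * (∑' n : ℕ, (catalan n : ℝ) * v ^ n) := by
    rw [← tsum_mul_left, ← tsum_mul_left]
    apply Summable.tsum_le_tsum _ ((my_summable hu0 hu).mul_left u)
      ((my_summable hv0 hvlt).mul_left v)
    intro n
    have h2 : (0:ℝ) ≤ (catalan n : ℝ) := Nat.cast_nonneg _
    have e1 : u * ((catalan n : ℝ) * u ^ n) = (catalan n : ℝ) * u ^ (n+1) := by ring
    have e2 : v * ((catalan n : ℝ) * v ^ n) = (catalan n : ℝ) * v ^ (n+1) := by ring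
    rw [e1, e2]
    exact mul_le_mul_of_nonneg_left (pow_le_pow_left₀ hu0 huv.le (n+1)) h2
  have hu' := key u hu0 hu
  have hv' := key v hv0 hvlt
  set a := u * (∑' n : ℕ, (catalan n : ℝ) * u ^ n) with ha
  set b := v * (∑' n : ℕ, (catalan n : ℝ) * v ^ n) with hb
  -- a > 1/2, so a - 1/2 = sqrt(1/4 - u); b ≥ a > 1/2 so b - 1/2 = sqrt(1/4 - v) < sqrt(1/4-u)
  have hagt : 1/2 < a := hgt
  have hbgt : 1/2 < b := lt_of_lt_of_le hagt hmono
  -- (a-1/2)^2 = 1/4 - u > 1/4 - v = (b-1/2)^2, with both a-1/2, b-1/2 > 0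
  have : (b - 1/2)^2 < (a - 1/2)^2 := by rw [hu', hv']; linarith
  nlinarith [this, hagt, hbgt, hmono]

lemma my_gf {u : ℝ} (hu0 : 0 ≤ u) (hu : u < 1/4) :
    u * (∑' n : ℕ, (catalan n : ℝ) * u ^ n) = 1/2 - Real.sqrt (1/4 - u) := by
  have key : (u * (∑' n : ℕ, (catalan n : ℝ) * u ^ n) - 1/2) ^ 2 = 1/4 - u := by
    have := my_quadratic hu0 hu
    nlinarith [this]
  have hle := my_root hu0 hu
  have h1 : (1/2 - u * (∑' n : ℕ, (catalan n : ℝ) * u ^ n)) ^ 2 = 1/4 - u := by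
    nlinarith [key]
  have h2 : Real.sqrt (1/4 - u) = 1/2 - u * (∑' n : ℕ, (catalan n : ℝ) * u ^ n) := by
    rw [← h1, Real.sqrt_sq (by linarith)]
  linarith [h2]

theorem stmt16 (x : ℝ) (hx : 1 < x) :
    Summable (fun i : ℕ =>
        (catalan (i+2) : ℝ) * x^(i+1) * (x - 1) / (x + 1)^(2*(i+2))) ∧
    (∑' i : ℕ, (catalan (i+2) : ℝ) * x^(i+1) * (x - 1) / (x + 1)^(2*(i+2)))
      = (x - 1)/x^2 - (x - 1)/(x + 1)^2 ∧
    (-3*x - 1) / (x * (x + 1)^2)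
      + (∑' i : ℕ, (catalan (i+2) : ℝ) * x^(i+1) * (x - 1) / (x + 1)^(2*(i+2)))
      = -1/x^2 := by
  have hx0 : (0:ℝ) < x := by linarith
  have hx1 : (0:ℝ) < x + 1 := by linarith
  set u : ℝ := x / (x + 1)^2 with hu_def
  have hu0 : 0 ≤ u := by positivity
  have hu : u < 1/4 := by
    rw [hu_def, div_lt_iff₀ (by positivity)]
    nlinarith [sq_nonneg (x - 1)]
  -- evaluate the generating function
  have hS : (∑' n : ℕ, (catalan n : ℝ) * u ^ n) = (x + 1) / x := by
    have h := my_gf hu0 hu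
    have hsq : 1/4 - u = ((x - 1) / (2 * (x + 1)))^2 := by
      rw [hu_def]; field_simp; ring
    have hsqrt : Real.sqrt (1/4 - u) = (x - 1) / (2 * (x + 1)) := by
      rw [hsq, Real.sqrt_sq (div_nonneg (by linarith) (by linarith))]
    rw [hsqrt] at h
    have hne : u ≠ 0 := by rw [hu_def]; positivity
    apply mul_left_cancel₀ hne
    rw [h, hu_def]
    field_simp
    ring
  -- rewrite the series terms
  have hterm : ∀ i : ℕ, (catalan (i+2) : ℝ) * x^(i+1) * (x - 1) / (x + 1)^(2*(i+2))
      = ((x - 1) / x) * ((catalan (i+2) : ℝ) * u ^ (i+2)) := by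
    intro i
    rw [hu_def, div_pow, pow_mul]
    have h1 : ((x+1)^2)^(i+2) ≠ 0 := by positivity
    field_simp
    ring
  have hsumS := my_summable hu0 hu
  -- summability of shifted series
  have hshift2 : Summable (fun i : ℕ => (catalan (i+2) : ℝ) * u ^ (i+2)) := by
    exact (summable_nat_add_iff 2).mpr hsumS
  have hsummable : Summable (fun i : ℕ =>
      (catalan (i+2) : ℝ) * x^(i+1) * (x - 1) / (x + 1)^(2*(i+2))) := by
    apply Summable.congr (hshift2.mul_left ((x - 1) / x))
    intro i
    exact (hterm i).symm
  -- value of shifted sum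
  have hval2 : (∑' i : ℕ, (catalan (i+2) : ℝ) * u ^ (i+2))
      = (x + 1) / x - 1 - u := by
    have e1 : (∑' n : ℕ, (catalan n : ℝ) * u ^ n)
        = (catalan 0 : ℝ) * u ^ 0 + ∑' n : ℕ, (catalan (n+1) : ℝ) * u ^ (n+1) :=
      Summable.tsum_eq_zero_add hsumS
    have hsum1 : Summable (fun n : ℕ => (catalan (n+1) : ℝ) * u ^ (n+1)) :=
      (summable_nat_add_iff 1).mpr hsumS
    have e2 : (∑' n : ℕ, (catalan (n+1) : ℝ) * u ^ (n+1))
        = (catalan 1 : ℝ) * u ^ 1 + ∑' n : ℕ, (catalan (n+2) : ℝ) * u ^ (n+2) :=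
      Summable.tsum_eq_zero_add hsum1
    rw [hS] at e1
    simp only [catalan_zero, catalan_one, Nat.cast_one, pow_zero, pow_one, one_mul] at e1 e2
    linarith [e1, e2]
  have hsumval : (∑' i : ℕ, (catalan (i+2) : ℝ) * x^(i+1) * (x - 1) / (x + 1)^(2*(i+2)))
      = (x - 1)/x^2 - (x - 1)/(x + 1)^2 := by
    have : (∑' i : ℕ, (catalan (i+2) : ℝ) * x^(i+1) * (x - 1) / (x + 1)^(2*(i+2)))
        = ((x - 1) / x) * (∑' i : ℕ, (catalan (i+2) : ℝ) * u ^ (i+2)) := by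
      rw [← tsum_mul_left]
      exact tsum_congr hterm
    rw [this, hval2, hu_def]
    field_simp
    ring
  refine ⟨hsummable, hsumval, ?_⟩
  rw [hsumval]
  field_simp
  ring
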